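/- Let E be a 3-dimensional F₂-vector space, ℱ its set of order-7 subgroups equipped with the affine structure vec(M₁,M₂) = fixed vector of N(M₁) ∩ N(M₂). Then for every h ∈ GL(E), the conjugation map M ↦ hMh⁻¹ on ℱ is an affine bijection whose associated linear map is h, i.e., vec(hM₁h⁻¹, hM₂h⁻¹) = h(vec(M₁,M₂)) for all M₁, M₂ ∈ ℱ. -/

import Mathlib

open Module Submodule

-- Aux linear lemma
lemma aux_lin {E : Type*} [AddCommGroup E] [Module (ZMod 2) E]
    (hdim : Module.finrank (ZMod 2) E = 3)
    (g : E ≃ₗ[ZMod 2] E) (hg3 : g ^ 3 = 1) {v w : E}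
    (hv : g v = v) (hw : g w = w) (v0 : v ≠ 0) (w0 : w ≠ 0) (vw : v ≠ w) : g = 1 := by
  classical
  haveI : FiniteDimensional (ZMod 2) E := FiniteDimensional.of_finrank_eq_succ hdim
  have hzmod : ∀ a : ZMod 2, a = 0 ∨ a = 1 := by decide
  have hli : LinearIndependent (ZMod 2) ((↑) : ({v, w} : Set E) → E) := by
    refine linearIndepOn_id_pair v0 ?_
    intro a ha
    rcases hzmod a with rfl | rfl
    · simp at ha; exact w0 ha.symm
    · simp at ha; exact vw ha
  set V₀ : Submodule (ZMod 2) E := span (ZMod 2) ({v, w} : Set E) with hV₀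
  have hvV : v ∈ V₀ := subset_span (by simp)
  have hwV : w ∈ V₀ := subset_span (by simp)
  have hr2 : finrank (ZMod 2) V₀ = 2 := by
    rw [hV₀, finrank_span_set_eq_card hli]
    rw [Set.toFinset_insert, Set.toFinset_singleton]
    rw [Finset.card_insert_of_notMem (by simp [vw])]
    simp
  have hq1 : finrank (ZMod 2) (E ⧸ V₀) = 1 := by
    have := V₀.finrank_quotient_add_finrank
    omega
  have hfix : ∀ z ∈ V₀, g z = z := by
    intro z hz
    induction hz using span_induction with
    | mem x hx => rcases hx with rfl | rfl; exacts [hv, hw]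
    | zero => simp
    | add x y _ _ hx hy => simp [hx, hy]
    | smul a x _ hx => simp [hx]
  have key2 : ∀ x : E, g (g x) = x := by
    intro x
    by_cases hx : x ∈ V₀
    · rw [hfix x hx, hfix x hx]
    · have hgx : g x ∉ V₀ := by
        intro hgx
        have e : g x = x := g.injective (hfix _ hgx)
        rw [e] at hgx; exact hx hgx
      have hπx : V₀.mkQ x ≠ 0 := by
        simpa [Submodule.Quotient.mk_eq_zero] using hx
      have hπgx : V₀.mkQ (g x) ≠ 0 := by
        simpa [Submodule.Quotient.mk_eq_zero] using hgx
      obtain ⟨c, hc⟩ := (finrank_eq_one_iff_of_nonzero' (V₀.mkQ x) hπx).mp hq1 (V₀.mkQ (g x))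
      have hc1 : c = 1 := by
        rcases hzmod c with rfl | rfl
        · exfalso; apply hπgx; rw [← hc, zero_smul]
        · rfl
      rw [hc1, one_smul] at hc
      have hsub : g x - x ∈ V₀ := by
        rw [Submodule.mkQ_apply, Submodule.mkQ_apply, Submodule.Quotient.eq] at hc
        simpa [neg_sub] using neg_mem hc
      set z := g x - x with hzdef
      have hz2 : g z = z := hfix _ hsub
      have hxz : g x = x + z := by rw [hzdef]; abel
      have hzz : z + z = 0 := by
        have h2 : z + z = (2 : ZMod 2) • z := (two_smul _ z).symm
        rw [h2, show (2 : ZMod 2) = 0 by decide, zero_smul]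
      calc g (g x) = g (x + z) := by rw [← hxz]
        _ = g x + g z := by rw [map_add]
        _ = (x + z) + z := by rw [hxz, hz2]
        _ = x + (z + z) := by abel
        _ = x := by rw [hzz, add_zero]
  have hg2 : g * g = 1 := by
    apply LinearEquiv.ext
    intro x
    exact key2 x
  have h31 : g ^ 3 = g := by
    rw [pow_succ, pow_two, hg2, one_mul]
  rw [← hg3, h31]


lemma aux_grp {Γ : Type*} [Group Γ] [Finite Γ] (hΓ : Nat.card Γ = 168)
    {A B : Subgroup Γ} (hA : Nat.card A = 7) (hB : Nat.card B = 7) (hAB : A ≠ B) :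
    ∃ g : Γ, g ∈ (Subgroup.normalizer (A : Set Γ)) ⊓ (Subgroup.normalizer (B : Set Γ)) ∧ g ≠ 1 ∧ g ^ 3 = 1 := by
  haveI : Fact (Nat.Prime 7) := ⟨by norm_num⟩
  haveI : Fact (Nat.Prime 3) := ⟨by norm_num⟩
  haveI : Finite (Subgroup Γ) :=
    Finite.of_injective (fun H : Subgroup Γ => (H : Set Γ)) SetLike.coe_injective
  haveI finSyl : Finite (Sylow 7 Γ) :=
    Finite.of_injective (fun P : Sylow 7 Γ => (P : Subgroup Γ))
      (fun P Q h => Sylow.ext h)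
  have hfact : (Nat.card Γ).factorization 7 = 1 := by
    rw [hΓ, show (168 : ℕ) = 7 ^ 1 * 24 by norm_num,
      Nat.factorization_mul (by norm_num) (by norm_num)]
    rw [Nat.Prime.factorization_pow (by norm_num)]
    simp [Nat.factorization_eq_zero_of_not_dvd (by norm_num : ¬ (7:ℕ) ∣ 24)]
  have cardA : Nat.card A = 7 ^ (Nat.card Γ).factorization 7 := by
    rw [hfact, pow_one, hA]
  have cardB : Nat.card B = 7 ^ (Nat.card Γ).factorization 7 := by
    rw [hfact, pow_one, hB]
  let QA : Sylow 7 Γ := Sylow.ofCard A cardA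
  let QB : Sylow 7 Γ := Sylow.ofCard B cardB
  have eA : (QA : Subgroup Γ) = A := Sylow.coe_ofCard A cardA
  have eB : (QB : Subgroup Γ) = B := Sylow.coe_ofCard B cardB
  -- number of Sylow 7-subgroups is 8
  have hne : QA ≠ QB := by
    intro e; apply hAB; rw [← eA, ← eB, e]
  haveI : Nontrivial (Sylow 7 Γ) := ⟨⟨QA, QB, hne⟩⟩
  have hm : Nat.card (Sylow 7 Γ) % 7 = 1 := card_sylow_modEq_one 7 Γ
  have hcQA : Nat.card (QA : Subgroup Γ) = 7 := by rw [eA]; exact hA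
  have hidxA : (QA : Subgroup Γ).index = 24 := by
    have := Subgroup.card_mul_index (QA : Subgroup Γ)
    rw [hcQA, hΓ] at this; omega
  have hdvd : Nat.card (Sylow 7 Γ) ∣ 24 := hidxA ▸ Sylow.card_dvd_index QA
  have hbig : 1 < Nat.card (Sylow 7 Γ) := Finite.one_lt_card_iff_nontrivial.mpr inferInstance
  have h8 : Nat.card (Sylow 7 Γ) = 8 := by
    have hle : Nat.card (Sylow 7 Γ) ≤ 24 := Nat.le_of_dvd (by norm_num) hdvd
    interval_cases (Nat.card (Sylow 7 Γ)) <;> omega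
  -- normalizers have cardinality 21
  have hNcard : ∀ P : Sylow 7 Γ, Nat.card (Subgroup.normalizer ((P : Subgroup Γ) : Set Γ)) = 21 := by
    intro P
    have h1 : Nat.card (Sylow 7 Γ) = Nat.card (Γ ⧸ (Subgroup.normalizer ((P : Subgroup Γ) : Set Γ))) :=
      Sylow.card_eq_card_quotient_normalizer P
    have h2 := Subgroup.card_eq_card_quotient_mul_card_subgroup (Subgroup.normalizer ((P : Subgroup Γ) : Set Γ))
    rw [hΓ, ← h1, h8] at h2; omega
  have hNA : Nat.card (Subgroup.normalizer (A : Set Γ)) = 21 := by rw [← eA]; exact hNcard QA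
  have hNB : Nat.card (Subgroup.normalizer (B : Set Γ)) = 21 := by rw [← eB]; exact hNcard QB
  set D := (Subgroup.normalizer (A : Set Γ)) ⊓ (Subgroup.normalizer (B : Set Γ)) with hD
  have hDdvd : Nat.card D ∣ 21 := by
    rw [← hNA]; exact Subgroup.card_dvd_of_le inf_le_left
  -- 7 does not divide |D|
  have h7 : ¬ (7 ∣ Nat.card D) := by
    intro hd
    obtain ⟨x, hx⟩ := exists_prime_orderOf_dvd_card' 7 hd
    have hxo : orderOf (x : Γ) = 7 := by
      rw [← hx]; exact Subgroup.orderOf_coe x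
    have hP : IsPGroup 7 (Subgroup.zpowers (x : Γ)) :=
      IsPGroup.of_card (by rw [Nat.card_zpowers, hxo, pow_one])
    have hmem : ∀ (C : Subgroup Γ) (eC : Nat.card C = 7), (x : Γ) ∈ (Subgroup.normalizer (A : Set Γ)) ⊓ (Subgroup.normalizer (B : Set Γ)) →
        True := fun _ _ _ => trivial
    have hxA : (x : Γ) ∈ A := by
      have hle : Subgroup.zpowers (x : Γ) ≤ (Subgroup.normalizer ((QA : Subgroup Γ) : Set Γ)) := by
        rw [eA]; exact Subgroup.zpowers_le.mpr (x.2.1)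
      have : Subgroup.zpowers (x : Γ) ⊓ Subgroup.normalizer ((QA : Subgroup Γ) : Set Γ) =
          Subgroup.zpowers (x : Γ) ⊓ (QA : Subgroup Γ) := hP.inf_normalizer_sylow QA
      have h' : Subgroup.zpowers (x : Γ) ≤ (QA : Subgroup Γ) := by
        rw [← inf_eq_left.mpr hle, this]
        exact inf_le_right
      rw [eA] at h'
      exact h' (Subgroup.mem_zpowers _)
    have hxB : (x : Γ) ∈ B := by
      have hle : Subgroup.zpowers (x : Γ) ≤ (Subgroup.normalizer ((QB : Subgroup Γ) : Set Γ)) := by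
        rw [eB]; exact Subgroup.zpowers_le.mpr (x.2.2)
      have : Subgroup.zpowers (x : Γ) ⊓ Subgroup.normalizer ((QB : Subgroup Γ) : Set Γ) =
          Subgroup.zpowers (x : Γ) ⊓ (QB : Subgroup Γ) := hP.inf_normalizer_sylow QB
      have h' : Subgroup.zpowers (x : Γ) ≤ (QB : Subgroup Γ) := by
        rw [← inf_eq_left.mpr hle, this]
        exact inf_le_right
      rw [eB] at h'
      exact h' (Subgroup.mem_zpowers _)
    -- then A = B
    have hle : Subgroup.zpowers (x : Γ) ≤ A ⊓ B := le_inf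
      (Subgroup.zpowers_le.mpr hxA) (Subgroup.zpowers_le.mpr hxB)
    have hcard7 : 7 ≤ Nat.card (A ⊓ B : Subgroup Γ) := by
      have := Subgroup.card_le_of_le hle
      rwa [Nat.card_zpowers, hxo] at this
    have hdvd7 : Nat.card (A ⊓ B : Subgroup Γ) ∣ 7 := by
      rw [← hA]; exact Subgroup.card_dvd_of_le inf_le_left
    have hc : Nat.card (A ⊓ B : Subgroup Γ) = 7 :=
      le_antisymm (Nat.le_of_dvd (by norm_num) hdvd7) hcard7
    have heq : A ⊓ B = A := Subgroup.eq_of_le_of_card_ge inf_le_left (by omega)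
    have heq' : A ⊓ B = B := Subgroup.eq_of_le_of_card_ge inf_le_right (by omega)
    exact hAB (heq.symm.trans heq')
  -- index of D is at most 64
  have hidxN : (Subgroup.normalizer (A : Set Γ)).index = 8 := by
    have := Subgroup.card_mul_index (Subgroup.normalizer (A : Set Γ))
    rw [hNA, hΓ] at this; omega
  have hidxNB : (Subgroup.normalizer (B : Set Γ)).index = 8 := by
    have := Subgroup.card_mul_index (Subgroup.normalizer (B : Set Γ))
    rw [hNB, hΓ] at this; omega
  have hidxD : D.index ≤ 64 := by
    have := Subgroup.index_inf_le (H := (Subgroup.normalizer (A : Set Γ))) (K := (Subgroup.normalizer (B : Set Γ)))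
    rwa [hidxN, hidxNB] at this
  have hD1 : Nat.card D ≠ 1 := by
    intro h1
    have := Subgroup.card_mul_index D
    rw [h1, one_mul, hΓ] at this
    omega
  have hD3 : Nat.card D = 3 := by
    have hcop : Nat.Coprime (Nat.card D) 7 :=
      (Nat.Prime.coprime_iff_not_dvd (by norm_num)).mpr h7 |>.symm
    have h3 : Nat.card D ∣ 3 :=
      hcop.dvd_of_dvd_mul_right (by rw [show (3*7 : ℕ) = 21 by norm_num]; exact hDdvd)
    have := Nat.le_of_dvd (by norm_num) h3
    interval_cases (Nat.card D) <;> omega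
  obtain ⟨x, hx⟩ := exists_prime_orderOf_dvd_card' (G := D) 3 (by rw [hD3])
  refine ⟨(x : Γ), x.2, ?_, ?_⟩
  · intro h1
    have hxo : orderOf (x : Γ) = 3 := by rw [← hx]; exact Subgroup.orderOf_coe x
    rw [h1] at hxo; simp at hxo
  · have hxo : orderOf (x : Γ) = 3 := by rw [← hx]; exact Subgroup.orderOf_coe x
    rw [← hxo]; exact pow_orderOf_eq_one _


lemma aux_card (E : Type*) [AddCommGroup E] [Module (ZMod 2) E]
    (hdim : Module.finrank (ZMod 2) E = 3) :
    Nat.card (E ≃ₗ[ZMod 2] E) = 168 := by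
  haveI : FiniteDimensional (ZMod 2) E := FiniteDimensional.of_finrank_eq_succ hdim
  let b := Module.finBasisOfFinrankEq (ZMod 2) E hdim
  let e1 : (E ≃ₗ[ZMod 2] E) ≃* LinearMap.GeneralLinearGroup (ZMod 2) E :=
    (LinearMap.GeneralLinearGroup.generalLinearEquiv (ZMod 2) E).symm
  let e2 : LinearMap.GeneralLinearGroup (ZMod 2) E ≃* GL (Fin 3) (ZMod 2) :=
    Units.mapEquiv (LinearMap.toMatrixAlgEquiv b).toMulEquiv
  have : Nat.card (E ≃ₗ[ZMod 2] E) = Nat.card (GL (Fin 3) (ZMod 2)) :=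
    Nat.card_congr (e1.trans e2).toEquiv
  rw [this, Matrix.card_GL_field]
  simp [Fin.prod_univ_three, ZMod.card]

/-- With the affine structure on the set of order-7 subgroups of `GL(E)` given
by `vec M₁ M₂` = the fixed vector of `N(M₁) ⊓ N(M₂)`, conjugation by any
`h ∈ GL(E)` is an affine map with linear part `h`:
`vec (h M₁ h⁻¹) (h M₂ h⁻¹) = h (vec M₁ M₂)`. -/
theorem stmt_17 (E : Type*) [AddCommGroup E] [Module (ZMod 2) E]
    (hdim : Module.finrank (ZMod 2) E = 3)
    (vec : Subgroup (E ≃ₗ[ZMod 2] E) → Subgroup (E ≃ₗ[ZMod 2] E) → E)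
    (hdiag : ∀ M, vec M M = 0)
    (hvec : ∀ M₁ M₂ : Subgroup (E ≃ₗ[ZMod 2] E),
      Nat.card M₁ = 7 → Nat.card M₂ = 7 → M₁ ≠ M₂ →
      vec M₁ M₂ ≠ 0 ∧
      ∀ g ∈ Subgroup.normalizer (M₁ : Set (E ≃ₗ[ZMod 2] E)) ⊓
        Subgroup.normalizer (M₂ : Set (E ≃ₗ[ZMod 2] E)), g (vec M₁ M₂) = vec M₁ M₂)
    (h : E ≃ₗ[ZMod 2] E)
    (M₁ M₂ : Subgroup (E ≃ₗ[ZMod 2] E))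
    (h₁ : Nat.card M₁ = 7) (h₂ : Nat.card M₂ = 7) :
    vec (M₁.map (MulAut.conj h).toMonoidHom) (M₂.map (MulAut.conj h).toMonoidHom)
      = h (vec M₁ M₂) := by
  haveI : FiniteDimensional (ZMod 2) E := FiniteDimensional.of_finrank_eq_succ hdim
  haveI : Finite E := Module.finite_iff_finite (R := ZMod 2).mp inferInstance
  haveI : Finite (E ≃ₗ[ZMod 2] E) :=
    Finite.of_injective (fun f => (f : E → E)) DFunLike.coe_injective
  set φ := (MulAut.conj h).toMonoidHom with hφ
  have hinj : Function.Injective φ := (MulAut.conj h).injective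
  by_cases hMeq : M₁ = M₂
  · subst hMeq
    rw [hdiag, hdiag, map_zero]
  · set M₁' := M₁.map φ with hM₁'
    set M₂' := M₂.map φ with hM₂'
    have hc₁ : Nat.card M₁' = 7 := by
      rw [← h₁]; exact Nat.card_congr (Subgroup.equivMapOfInjective M₁ φ hinj).toEquiv.symm
    have hc₂ : Nat.card M₂' = 7 := by
      rw [← h₂]; exact Nat.card_congr (Subgroup.equivMapOfInjective M₂ φ hinj).toEquiv.symm
    have hne' : M₁' ≠ M₂' := fun e => hMeq (Subgroup.map_injective hinj e)
    obtain ⟨v0, vfix⟩ := hvec M₁' M₂' hc₁ hc₂ hne'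
    obtain ⟨w0, wfix⟩ := hvec M₁ M₂ h₁ h₂ hMeq
    obtain ⟨g, hgmem, hg1, hg3⟩ := aux_grp (aux_card E hdim) hc₁ hc₂ hne'
    -- g fixes vec M₁' M₂'
    have hv : g (vec M₁' M₂') = vec M₁' M₂' := vfix g hgmem
    -- g fixes h (vec M₁ M₂)
    have hNmap : (Subgroup.normalizer (M₁' : Set (E ≃ₗ[ZMod 2] E))) ⊓ (Subgroup.normalizer (M₂' : Set (E ≃ₗ[ZMod 2] E)))
        = ((Subgroup.normalizer (M₁ : Set (E ≃ₗ[ZMod 2] E))) ⊓ (Subgroup.normalizer (M₂ : Set (E ≃ₗ[ZMod 2] E)))).map φ := by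
      rw [Subgroup.map_inf _ _ φ hinj,
        Subgroup.map_equiv_normalizer_eq M₁ (MulAut.conj h),
        Subgroup.map_equiv_normalizer_eq M₂ (MulAut.conj h)]
    have hw : g (h (vec M₁ M₂)) = h (vec M₁ M₂) := by
      rw [hNmap] at hgmem
      obtain ⟨k, hk, rfl⟩ := hgmem
      have hk' : k (vec M₁ M₂) = vec M₁ M₂ := wfix k hk
      show ((MulAut.conj h) k) (h (vec M₁ M₂)) = h (vec M₁ M₂)
      rw [MulAut.conj_apply]
      show (h * k * h⁻¹) (h (vec M₁ M₂)) = h (vec M₁ M₂)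
      have : ∀ x, (h * k * h⁻¹) x = h (k (h⁻¹ x)) := fun x => rfl
      rw [this]
      have hinv : (h⁻¹ : E ≃ₗ[ZMod 2] E) (h (vec M₁ M₂)) = vec M₁ M₂ := by
        show (h⁻¹ : E ≃ₗ[ZMod 2] E) (h (vec M₁ M₂)) = _
        rw [show (h⁻¹ : E ≃ₗ[ZMod 2] E) = h.symm from rfl, h.symm_apply_apply]
      rw [hinv, hk']
    have hw0 : h (vec M₁ M₂) ≠ 0 := fun e => w0 (by
      have := h.symm_apply_apply (vec M₁ M₂)
      rw [e, map_zero] at this; exact this.symm)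
    by_contra hne
    exact hg1 (aux_lin hdim g hg3 hv hw v0 hw0 hne)
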